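/- Under the general MCAR assumption ((X,Y) ⟂⟂ P) with E[X_j²] ≤ L² for all j, the zero-imputation bias satisfies B_imp ≤ B_ridge,Λ with Λ = L² λ_max(C), where C_{kj} = Cov(P_k,P_j)/(ρ_k ρ_j), ρ_j = P(P_j=1) > 0, and B_ridge,Λ = inf_θ { R(θ) + Λ‖θ‖₂² } − inf_θ R(θ). -/

import Mathlib

open MeasureTheory ProbabilityTheory Matrix

theorem quadform_le {d : ℕ} {C : Matrix (Fin d) (Fin d) ℝ} (hCh : C.IsHermitian) (v : Fin d → ℝ) :
    ∑ k, ∑ j, C k j * v k * v j ≤ (⨆ i, hCh.eigenvalues i) * ∑ j, v j ^ 2 := by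
  classical
  set lam := ⨆ i, hCh.eigenvalues i with hlam
  have hbdd : BddAbove (Set.range hCh.eigenvalues) := (Set.finite_range _).bddAbove
  have hle : ∀ i, hCh.eigenvalues i ≤ lam := fun i => le_ciSup hbdd i
  set U : Matrix (Fin d) (Fin d) ℝ := (hCh.eigenvectorUnitary : Matrix (Fin d) (Fin d) ℝ) with hUdef
  have h1 : U * star U = 1 := Matrix.mem_unitaryGroup_iff.mp hCh.eigenvectorUnitary.2
  have hspec : C = U * Matrix.diagonal (RCLike.ofReal ∘ hCh.eigenvalues) * star U :=
    hCh.spectral_theorem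
  have hPSD : Matrix.PosSemidef (U * Matrix.diagonal (fun i => lam - hCh.eigenvalues i) * Uᴴ) :=
    (Matrix.PosSemidef.diagonal (fun i => sub_nonneg.2 (hle i))).mul_mul_conjTranspose_same U
  have hAeq : U * Matrix.diagonal (fun i => lam - hCh.eigenvalues i) * Uᴴ
      = lam • (1 : Matrix (Fin d) (Fin d) ℝ) - C := by
    have hdiag : Matrix.diagonal (fun i => lam - hCh.eigenvalues i)
        = lam • (1 : Matrix (Fin d) (Fin d) ℝ)
          - Matrix.diagonal (RCLike.ofReal ∘ hCh.eigenvalues) := by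
      ext i j
      by_cases h : i = j <;>
        simp [Matrix.diagonal_apply, Matrix.one_apply, h]
    rw [← Matrix.star_eq_conjTranspose, hdiag, Matrix.mul_sub, Matrix.sub_mul,
      mul_smul_comm, smul_mul_assoc, mul_one, h1, ← hspec]
  have h0 : 0 ≤ star v ⬝ᵥ ((lam • (1 : Matrix (Fin d) (Fin d) ℝ) - C) *ᵥ v) := by
    rw [← hAeq]; exact hPSD.dotProduct_mulVec_nonneg v
  have e2 : v ⬝ᵥ (C *ᵥ v) = ∑ k, ∑ j, C k j * v k * v j := by
    simp only [dotProduct, mulVec, Finset.mul_sum]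
    exact Finset.sum_congr rfl fun k _ => Finset.sum_congr rfl fun j _ => by ring
  have e1 : v ⬝ᵥ (lam • v) = lam * ∑ j, v j ^ 2 := by
    simp only [dotProduct, Pi.smul_apply, smul_eq_mul, Finset.mul_sum]
    exact Finset.sum_congr rfl fun i _ => by ring
  have hexp : star v ⬝ᵥ ((lam • (1 : Matrix (Fin d) (Fin d) ℝ) - C) *ᵥ v)
      = lam * ∑ j, v j ^ 2 - ∑ k, ∑ j, C k j * v k * v j := by
    rw [star_trivial, Matrix.sub_mulVec, dotProduct_sub, Matrix.smul_mulVec,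
      Matrix.one_mulVec, e1, e2]
  linarith

theorem integrable_mul2 {Ω : Type*} {mΩ : MeasurableSpace Ω} {μ : Measure Ω}
    {f g : Ω → ℝ} (hf : MemLp f 2 μ) (hg : MemLp g 2 μ) :
    Integrable (fun ω => f ω * g ω) μ := by
  have h : MemLp (f • g) 1 μ := hg.smul hf
  exact memLp_one_iff_integrable.mp h

theorem integral_sub_sq {Ω : Type*} {mΩ : MeasurableSpace Ω} {μ : Measure Ω}
    {f g : Ω → ℝ} (hf : MemLp f 2 μ) (hg : MemLp g 2 μ) :
    ∫ ω, (f ω - g ω) ^ 2 ∂μ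
      = ∫ ω, f ω ^ 2 ∂μ - 2 * ∫ ω, f ω * g ω ∂μ + ∫ ω, g ω ^ 2 ∂μ := by
  have h1 := hf.integrable_sq
  have h2 := hg.integrable_sq
  have h3 := integrable_mul2 hf hg
  have hpt : ∀ ω, (f ω - g ω) ^ 2 = f ω ^ 2 - 2 * (f ω * g ω) + g ω ^ 2 := fun ω => by ring
  rw [integral_congr_ae (Filter.Eventually.of_forall hpt)]
  have h4 : Integrable (fun ω => f ω ^ 2 - 2 * (f ω * g ω)) μ := h1.sub (h3.const_mul 2)
  rw [integral_add h4 h2, integral_sub h1 (h3.const_mul 2), integral_const_mul]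

theorem stmt12 {Ω : Type*} {mΩ : MeasurableSpace Ω} (μ : Measure Ω) [IsProbabilityMeasure μ]
    {d : ℕ} (X : Ω → Fin d → ℝ) (Y : Ω → ℝ) (P : Ω → Fin d → ℝ)
    (hXm : Measurable X) (hYm : Measurable Y) (hPm : Measurable P)
    (hX2 : ∀ j, MemLp (fun ω => X ω j) 2 μ) (hY2 : MemLp Y 2 μ)
    (hP01 : ∀ ω j, P ω j = 0 ∨ P ω j = 1)
    (hMCAR : IndepFun (fun ω => (X ω, Y ω)) P μ)
    (L : ℝ) (hL : ∀ j, ∫ ω, X ω j ^ 2 ∂μ ≤ L ^ 2)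
    (ρ : Fin d → ℝ) (hρdef : ∀ j, ρ j = (μ {ω | P ω j = 1}).toReal)
    (hρpos : ∀ j, 0 < ρ j)
    (C : Matrix (Fin d) (Fin d) ℝ)
    (hC : C = Matrix.of fun k j =>
      (∫ ω, P ω k * P ω j ∂μ - ρ k * ρ j) / (ρ k * ρ j))
    (hCh : C.IsHermitian)
    (Rimp R : (Fin d → ℝ) → ℝ)
    (hRimp : ∀ θ, Rimp θ = ∫ ω, (Y ω - ∑ j, θ j * (P ω j * X ω j)) ^ 2 ∂μ)
    (hR : ∀ θ, R θ = ∫ ω, (Y ω - ∑ j, θ j * X ω j) ^ 2 ∂μ) :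
    (⨅ θ : Fin d → ℝ, Rimp θ) - (⨅ θ : Fin d → ℝ, R θ) ≤
      (⨅ θ : Fin d → ℝ, (R θ + (L ^ 2 * ⨆ i, hCh.eigenvalues i) * ∑ j, θ j ^ 2)) -
        (⨅ θ : Fin d → ℝ, R θ) := by
  classical
  have hXj : ∀ j, Measurable fun ω => X ω j := fun j => (measurable_pi_apply j).comp hXm
  have hPj : ∀ j, Measurable fun ω => P ω j := fun j => (measurable_pi_apply j).comp hPm
  have hc : ∀ j : Fin d, ρ j ≠ 0 := fun j => ne_of_gt (hρpos j)
  have hZ2 : ∀ j, MemLp (fun ω => P ω j * X ω j) 2 μ := fun j =>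
    MemLp.of_le (hX2 j) ((hPj j).mul (hXj j)).aestronglyMeasurable
      (Filter.Eventually.of_forall fun ω => by
        rcases hP01 ω j with h | h <;> simp [h, Real.norm_eq_abs, abs_nonneg])
  have hPint : ∀ j, ∫ ω, P ω j ∂μ = ρ j := by
    intro j
    have hs : MeasurableSet {ω | P ω j = 1} := (hPj j) (measurableSet_singleton 1)
    have heq : (fun ω => P ω j)
        = fun ω => Set.indicator {ω | P ω j = 1} (fun _ => (1 : ℝ)) ω := by
      funext ω
      rcases hP01 ω j with h | h
      · rw [h, Set.indicator_of_notMem]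
        simp only [Set.mem_setOf_eq, h]
        norm_num
      · rw [Set.indicator_of_mem (show ω ∈ {ω | P ω j = 1} from h)]
        exact h
    rw [heq, integral_indicator_const (1 : ℝ) hs, hρdef j, smul_eq_mul, mul_one]
    rfl
  have hρ1 : ∀ j, ρ j ≤ 1 := by
    intro j
    rw [hρdef j]
    calc (μ {ω | P ω j = 1}).toReal ≤ (1 : ENNReal).toReal :=
          ENNReal.toReal_mono ENNReal.one_ne_top prob_le_one
      _ = 1 := by simp
  have hPP : ∀ k j, ∫ ω, P ω k * P ω j ∂μ = (C k j + 1) * (ρ k * ρ j) := by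
    intro k j
    rw [hC]
    simp only [Matrix.of_apply]
    field_simp [hc k, hc j]
    ring
  set lam : ℝ := ⨆ i, hCh.eigenvalues i with hlamdef
  have hlam0 : 0 ≤ lam := by
    rcases Nat.eq_zero_or_pos d with hd | hd
    · subst hd
      rw [hlamdef, Real.iSup_of_isEmpty]
    · have j0 : Fin d := ⟨0, hd⟩
      have hPP' : ∫ ω, P ω j0 * P ω j0 ∂μ = ρ j0 := by
        have h : (fun ω => P ω j0 * P ω j0) = fun ω => P ω j0 := by
          funext ω; rcases hP01 ω j0 with h | h <;> simp [h]
        rw [h, hPint j0]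
      have hCjj : 0 ≤ C j0 j0 := by
        rw [hC]
        simp only [Matrix.of_apply]
        rw [hPP']
        apply div_nonneg
        · nlinarith [hρpos j0, hρ1 j0]
        · exact le_of_lt (mul_pos (hρpos j0) (hρpos j0))
      have hq := quadform_le hCh (Pi.single j0 1 : Fin d → ℝ)
      have hL1 : ∑ k, ∑ j, C k j * (Pi.single j0 1 : Fin d → ℝ) k * (Pi.single j0 1 : Fin d → ℝ) j = C j0 j0 := by
        rw [Finset.sum_eq_single j0]
        · rw [Finset.sum_eq_single j0]
          · simp
          · intro b _ hb; simp [Pi.single_apply, hb]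
          · simp
        · intro b _ hb
          apply Finset.sum_eq_zero
          intro x _
          simp [Pi.single_apply, hb]
        · simp
      have hL2 : ∑ j, ((Pi.single j0 1 : Fin d → ℝ) j) ^ 2 = 1 := by
        rw [Finset.sum_eq_single j0]
        · simp
        · intro b _ hb; simp [Pi.single_apply, hb]
        · simp
      rw [hL1, hL2, mul_one] at hq
      linarith
  -- key inequality
  have key : ∀ θ : Fin d → ℝ,
      Rimp (fun j => θ j / ρ j) ≤ R θ + (L ^ 2 * lam) * ∑ j, θ j ^ 2 := by
    intro θ
    have hSm : MemLp (fun ω => ∑ j, θ j / ρ j * (P ω j * X ω j)) 2 μ :=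
      memLp_finset_sum Finset.univ (fun j _ => (hZ2 j).const_mul (θ j / ρ j))
    have hTm : MemLp (fun ω => ∑ j, θ j * X ω j) 2 μ :=
      memLp_finset_sum Finset.univ (fun j _ => (hX2 j).const_mul (θ j))
    have hYX : ∀ j, Integrable (fun ω => Y ω * X ω j) μ := fun j => integrable_mul2 hY2 (hX2 j)
    have hXX : ∀ k j, Integrable (fun ω => X ω k * X ω j) μ := fun k j =>
      integrable_mul2 (hX2 k) (hX2 j)
    have hYZ : ∀ j, Integrable (fun ω => Y ω * (P ω j * X ω j)) μ := fun j =>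
      integrable_mul2 hY2 (hZ2 j)
    have hZZ : ∀ k j, Integrable (fun ω => (P ω k * X ω k) * (P ω j * X ω j)) μ := fun k j =>
      integrable_mul2 (hZ2 k) (hZ2 j)
    have hIYX : ∀ j, ∫ ω, (Y ω * X ω j) * P ω j ∂μ = (∫ ω, Y ω * X ω j ∂μ) * ρ j := by
      intro j
      have hind : IndepFun (fun ω => Y ω * X ω j) (fun ω => P ω j) μ :=
        hMCAR.comp (φ := fun p : (Fin d → ℝ) × ℝ => p.2 * p.1 j)
          (ψ := fun q : Fin d → ℝ => q j)
          (measurable_snd.mul ((measurable_pi_apply j).comp measurable_fst))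
          (measurable_pi_apply j)
      rw [hind.integral_fun_mul_eq_mul_integral (hYm.mul (hXj j)).aestronglyMeasurable
        (hPj j).aestronglyMeasurable, hPint j]
    have hIXX : ∀ k j, ∫ ω, (X ω k * X ω j) * (P ω k * P ω j) ∂μ
        = (∫ ω, X ω k * X ω j ∂μ) * ∫ ω, P ω k * P ω j ∂μ := by
      intro k j
      have hind : IndepFun (fun ω => X ω k * X ω j) (fun ω => P ω k * P ω j) μ :=
        hMCAR.comp (φ := fun p : (Fin d → ℝ) × ℝ => p.1 k * p.1 j)
          (ψ := fun q : Fin d → ℝ => q k * q j)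
          (((measurable_pi_apply k).comp measurable_fst).mul
            ((measurable_pi_apply j).comp measurable_fst))
          ((measurable_pi_apply k).mul (measurable_pi_apply j))
      rw [hind.integral_fun_mul_eq_mul_integral ((hXj k).mul (hXj j)).aestronglyMeasurable
        ((hPj k).mul (hPj j)).aestronglyMeasurable]
    have hYS : ∫ ω, Y ω * ∑ j, θ j / ρ j * (P ω j * X ω j) ∂μ
        = ∑ j, θ j * ∫ ω, Y ω * X ω j ∂μ := by
      have hpt : (fun ω => Y ω * ∑ j, θ j / ρ j * (P ω j * X ω j))
          = fun ω => ∑ j, (θ j / ρ j) * (Y ω * (P ω j * X ω j)) := by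
        funext ω
        rw [Finset.mul_sum]
        exact Finset.sum_congr rfl fun j _ => by ring
      rw [hpt, integral_finset_sum _ (fun j _ => ((hYZ j).const_mul _))]
      refine Finset.sum_congr rfl fun j _ => ?_
      rw [integral_const_mul]
      have h2 : ∫ ω, Y ω * (P ω j * X ω j) ∂μ = ∫ ω, (Y ω * X ω j) * P ω j ∂μ :=
        integral_congr_ae (Filter.Eventually.of_forall fun ω => by ring)
      rw [h2, hIYX j]
      field_simp [hc j]
    have hYT : ∫ ω, Y ω * ∑ j, θ j * X ω j ∂μ = ∑ j, θ j * ∫ ω, Y ω * X ω j ∂μ := by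
      have hpt : (fun ω => Y ω * ∑ j, θ j * X ω j)
          = fun ω => ∑ j, θ j * (Y ω * X ω j) := by
        funext ω
        rw [Finset.mul_sum]
        exact Finset.sum_congr rfl fun j _ => by ring
      rw [hpt, integral_finset_sum _ (fun j _ => ((hYX j).const_mul _))]
      exact Finset.sum_congr rfl fun j _ => integral_const_mul _ _
    have hS2 : ∫ ω, (∑ j, θ j / ρ j * (P ω j * X ω j)) ^ 2 ∂μ
        = ∑ k, ∑ j, (θ k * θ j * (C k j + 1)) * ∫ ω, X ω k * X ω j ∂μ := by
      have hpt : (fun ω => (∑ j, θ j / ρ j * (P ω j * X ω j)) ^ 2)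
          = fun ω => ∑ k, ∑ j, (θ k / ρ k * (θ j / ρ j))
              * ((P ω k * X ω k) * (P ω j * X ω j)) := by
        funext ω
        rw [sq, Finset.sum_mul_sum]
        exact Finset.sum_congr rfl fun k _ => Finset.sum_congr rfl fun j _ => by ring
      rw [hpt, integral_finset_sum _
        (fun k _ => integrable_finset_sum _ (fun j _ => ((hZZ k j).const_mul _)))]
      refine Finset.sum_congr rfl fun k _ => ?_
      rw [integral_finset_sum _ (fun j _ => ((hZZ k j).const_mul _))]
      refine Finset.sum_congr rfl fun j _ => ?_
      rw [integral_const_mul]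
      have h2 : ∫ ω, (P ω k * X ω k) * (P ω j * X ω j) ∂μ
          = ∫ ω, (X ω k * X ω j) * (P ω k * P ω j) ∂μ :=
        integral_congr_ae (Filter.Eventually.of_forall fun ω => by ring)
      rw [h2, hIXX k j, hPP k j]
      field_simp [hc k, hc j]
    have hT2 : ∫ ω, (∑ j, θ j * X ω j) ^ 2 ∂μ
        = ∑ k, ∑ j, (θ k * θ j) * ∫ ω, X ω k * X ω j ∂μ := by
      have hpt : (fun ω => (∑ j, θ j * X ω j) ^ 2)
          = fun ω => ∑ k, ∑ j, (θ k * θ j) * (X ω k * X ω j) := by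
        funext ω
        rw [sq, Finset.sum_mul_sum]
        exact Finset.sum_congr rfl fun k _ => Finset.sum_congr rfl fun j _ => by ring
      rw [hpt, integral_finset_sum _
        (fun k _ => integrable_finset_sum _ (fun j _ => ((hXX k j).const_mul _)))]
      refine Finset.sum_congr rfl fun k _ => ?_
      rw [integral_finset_sum _ (fun j _ => ((hXX k j).const_mul _))]
      exact Finset.sum_congr rfl fun j _ => integral_const_mul _ _
    -- the difference term
    have hdiff : ∑ k, ∑ j, (θ k * θ j * (C k j + 1)) * ∫ ω, X ω k * X ω j ∂μ
        - ∑ k, ∑ j, (θ k * θ j) * ∫ ω, X ω k * X ω j ∂μ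
        = ∑ k, ∑ j, (C k j * θ k * θ j) * ∫ ω, X ω k * X ω j ∂μ := by
      rw [← Finset.sum_sub_distrib]
      refine Finset.sum_congr rfl fun k _ => ?_
      rw [← Finset.sum_sub_distrib]
      exact Finset.sum_congr rfl fun j _ => by ring
    have hint : ∀ k j, Integrable (fun ω => C k j * (θ k * X ω k) * (θ j * X ω j)) μ := by
      intro k j
      have h : (fun ω => C k j * (θ k * X ω k) * (θ j * X ω j))
          = fun ω => (C k j * θ k * θ j) * (X ω k * X ω j) := by funext ω; ring
      rw [h]
      exact (hXX k j).const_mul _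
    have hsq : ∀ j, Integrable (fun ω => (θ j * X ω j) ^ 2) μ := by
      intro j
      have h : (fun ω => (θ j * X ω j) ^ 2) = fun ω => θ j ^ 2 * (X ω j * X ω j) := by
        funext ω; ring
      rw [h]
      exact (hXX j j).const_mul _
    have hDram : ∑ k, ∑ j, (C k j * θ k * θ j) * ∫ ω, X ω k * X ω j ∂μ
        ≤ L ^ 2 * lam * ∑ j, θ j ^ 2 := by
      have h1 : ∑ k, ∑ j, (C k j * θ k * θ j) * ∫ ω, X ω k * X ω j ∂μ
          = ∫ ω, ∑ k, ∑ j, C k j * (θ k * X ω k) * (θ j * X ω j) ∂μ := by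
        rw [integral_finset_sum _ (fun k _ => integrable_finset_sum _ fun j _ => hint k j)]
        refine Finset.sum_congr rfl fun k _ => ?_
        rw [integral_finset_sum _ (fun j _ => hint k j)]
        refine Finset.sum_congr rfl fun j _ => ?_
        rw [← integral_const_mul]
        exact integral_congr_ae (Filter.Eventually.of_forall fun ω => by ring)
      have h2 : ∫ ω, ∑ k, ∑ j, C k j * (θ k * X ω k) * (θ j * X ω j) ∂μ
          ≤ ∫ ω, lam * ∑ j, (θ j * X ω j) ^ 2 ∂μ := by
        refine integral_mono
          (integrable_finset_sum _ fun k _ => integrable_finset_sum _ fun j _ => hint k j)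
          ((integrable_finset_sum _ fun j _ => hsq j).const_mul lam)
          (fun ω => quadform_le hCh (fun j => θ j * X ω j))
      have h3 : ∫ ω, lam * ∑ j, (θ j * X ω j) ^ 2 ∂μ
          = lam * ∑ j, θ j ^ 2 * ∫ ω, X ω j ^ 2 ∂μ := by
        rw [integral_const_mul]
        congr 1
        rw [integral_finset_sum _ (fun j _ => hsq j)]
        refine Finset.sum_congr rfl fun j _ => ?_
        rw [← integral_const_mul]
        exact integral_congr_ae (Filter.Eventually.of_forall fun ω => by ring)
      have h4 : lam * ∑ j, θ j ^ 2 * ∫ ω, X ω j ^ 2 ∂μ ≤ L ^ 2 * lam * ∑ j, θ j ^ 2 := by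
        have h5 : ∑ j, θ j ^ 2 * ∫ ω, X ω j ^ 2 ∂μ ≤ ∑ j, θ j ^ 2 * L ^ 2 :=
          Finset.sum_le_sum fun j _ => mul_le_mul_of_nonneg_left (hL j) (sq_nonneg _)
        have h6 : lam * ∑ j, θ j ^ 2 * ∫ ω, X ω j ^ 2 ∂μ ≤ lam * ∑ j, θ j ^ 2 * L ^ 2 :=
          mul_le_mul_of_nonneg_left h5 hlam0
        calc lam * ∑ j, θ j ^ 2 * ∫ ω, X ω j ^ 2 ∂μ ≤ lam * ∑ j, θ j ^ 2 * L ^ 2 := h6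
          _ = L ^ 2 * lam * ∑ j, θ j ^ 2 := by
              rw [Finset.mul_sum, Finset.mul_sum]
              exact Finset.sum_congr rfl fun j _ => by ring
      linarith [h1 ▸ (h2.trans_eq h3)]
    -- assemble
    rw [hRimp, hR]
    have e1 : ∫ ω, (Y ω - ∑ j, (fun j => θ j / ρ j) j * (P ω j * X ω j)) ^ 2 ∂μ
        = ∫ ω, Y ω ^ 2 ∂μ - 2 * ∫ ω, Y ω * ∑ j, θ j / ρ j * (P ω j * X ω j) ∂μ
          + ∫ ω, (∑ j, θ j / ρ j * (P ω j * X ω j)) ^ 2 ∂μ := integral_sub_sq hY2 hSm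
    have e2 : ∫ ω, (Y ω - ∑ j, θ j * X ω j) ^ 2 ∂μ
        = ∫ ω, Y ω ^ 2 ∂μ - 2 * ∫ ω, Y ω * ∑ j, θ j * X ω j ∂μ
          + ∫ ω, (∑ j, θ j * X ω j) ^ 2 ∂μ := integral_sub_sq hY2 hTm
    rw [e1, e2, hYS, hYT, hS2, hT2]
    linarith [hdiff, hDram]
  -- conclude
  have hnn : ∀ θ, 0 ≤ Rimp θ := fun θ => by
    rw [hRimp]; exact integral_nonneg fun ω => sq_nonneg _
  have hbdd : BddBelow (Set.range Rimp) := ⟨0, by rintro x ⟨θ, rfl⟩; exact hnn θ⟩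
  apply sub_le_sub_right
  refine le_ciInf fun θ => ?_
  exact (ciInf_le hbdd (fun j => θ j / ρ j)).trans (key θ)
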